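/- For any positive integers s_1 < s_2 < ⋯ < s_n, the shifted matroid SM(s_1,…,s_n) is representable over the field ℚ of rational numbers; that is, SM(s_1,…,s_n) is isomorphic to the vector matroid of a family of s_n vectors in a ℚ-vector space. -/
import Mathlib

open Finset

/-- `A` is a basis of the shifted matroid `SM(s_0, …, s_{n-1})`: an `n`-element set of
positive integers whose `i`-th smallest element is at most `s i`. -/
def IsShiftedBasis (n : ℕ) (s : Fin n → ℕ) (A : Finset ℕ) : Prop :=
  (∀ a ∈ A, 0 < a) ∧ ∃ h : A.card = n, ∀ i : Fin n, (A.orderIsoOfFin h i : ℕ) ≤ s i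


/-- Counting characterization of the j-th smallest element bound. -/
lemma orderIso_le_iff (A : Finset ℕ) {k : ℕ} (h : A.card = k) (j : Fin k) (y : ℕ) :
    (A.orderIsoOfFin h j : ℕ) ≤ y ↔ (A.filter (fun a => y < a)).card + (j : ℕ) + 1 ≤ k := by
  classical
  have hpart : (A.filter (fun a => y < a)).card + (A.filter (fun a => ¬ y < a)).card = A.card :=
    Finset.card_filter_add_card_filter_not _
  have hle : (A.filter (fun a => ¬ y < a)) = A.filter (fun a => a ≤ y) := by
    apply Finset.filter_congr; intro x _; simp
  rw [hle] at hpart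
  set e := A.orderEmbOfFin h with he
  have hrange : ∀ x ∈ A, ∃ i : Fin k, e i = x := by
    intro x hx
    have : x ∈ Set.range e := by rw [Finset.range_orderEmbOfFin]; exact hx
    exact this
  constructor
  · intro hj
    have himg : (Finset.Iic j).image e ⊆ A.filter (fun a => a ≤ y) := by
      intro x hx
      simp only [Finset.mem_image, Finset.mem_Iic] at hx
      obtain ⟨i, hi, rfl⟩ := hx
      refine Finset.mem_filter.2 ⟨Finset.orderEmbOfFin_mem A h i, ?_⟩
      exact le_trans (e.monotone hi) hj
    have hcard : (Finset.Iic j).card ≤ (A.filter (fun a => a ≤ y)).card := by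
      calc (Finset.Iic j).card = ((Finset.Iic j).image e).card :=
            (Finset.card_image_of_injective _ e.injective).symm
        _ ≤ _ := Finset.card_le_card himg
    rw [Fin.card_Iic] at hcard
    omega
  · intro hcount
    by_contra hj
    push_neg at hj
    have hsub : A.filter (fun a => a ≤ y) ⊆ (Finset.Iio j).image e := by
      intro x hx
      rw [Finset.mem_filter] at hx
      obtain ⟨i, rfl⟩ := hrange x hx.1
      refine Finset.mem_image.2 ⟨i, ?_, rfl⟩
      rw [Finset.mem_Iio]
      by_contra hij
      push_neg at hij
      exact absurd (le_trans (e.monotone hij) hx.2) (not_le.2 hj)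
    have := Finset.card_le_card hsub
    have h2 : ((Finset.Iio j).image e).card ≤ (j : ℕ) := by
      calc ((Finset.Iio j).image e).card ≤ (Finset.Iio j).card := Finset.card_image_le
        _ = (j : ℕ) := Fin.card_Iio j
    omega

/-- Existence of a downward-closed subset of given cardinality. -/
lemma exists_downclosed (F : Finset ℕ) (t : ℕ) (ht : t ≤ F.card) :
    ∃ C : Finset ℕ, C ⊆ F ∧ C.card = t ∧ ∀ c ∈ C, ∀ f ∈ F, f ≤ c → f ∈ C := by
  classical
  induction t with
  | zero => exact ⟨∅, by simp⟩
  | succ t ih =>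
    obtain ⟨C, hCF, hCcard, hdc⟩ := ih (by omega)
    have hne : (F \ C).Nonempty := by
      rw [← Finset.card_pos, Finset.card_sdiff_of_subset hCF]; omega
    set x := (F \ C).min' hne with hx
    have hxmem : x ∈ F \ C := Finset.min'_mem _ hne
    rw [Finset.mem_sdiff] at hxmem
    refine ⟨insert x C, ?_, ?_, ?_⟩
    · exact Finset.insert_subset hxmem.1 hCF
    · rw [Finset.card_insert_of_notMem hxmem.2, hCcard]
    · intro c hc f hf hfc
      rcases Finset.mem_insert.1 hc with hc' | hcC
      · by_cases hfC : f ∈ C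
        · exact Finset.mem_insert_of_mem hfC
        · have h1 : x ≤ f := Finset.min'_le _ _ (Finset.mem_sdiff.2 ⟨hf, hfC⟩)
          have h2 : f = x := le_antisymm (hc' ▸ hfc) h1
          simp [h2]
      · exact Finset.mem_insert_of_mem (hdc c hcC f hf hfc)

lemma s_lb {n : ℕ} {s : Fin n → ℕ} (hs : StrictMono s) (hpos : ∀ i, 0 < s i) :
    ∀ i : Fin n, (i : ℕ) + 1 ≤ s i := by
  have H : ∀ m (h : m < n), m + 1 ≤ s ⟨m, h⟩ := by
    intro m
    induction m with
    | zero => intro h; exact hpos _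
    | succ j ih =>
      intro h
      have h1 : (⟨j, by omega⟩ : Fin n) < ⟨j + 1, h⟩ := by simp [Fin.lt_def]
      have h2 := hs h1
      have h3 := ih (by omega)
      omega
  intro i
  have := H i.1 i.2
  simpa using this

/-- The counting characterization of `IsShiftedBasis`. -/
lemma isShiftedBasis_iff_count (n : ℕ) (s : Fin n → ℕ) (B : Finset ℕ) :
    IsShiftedBasis n s B ↔ (∀ a ∈ B, 0 < a) ∧ B.card = n ∧
      ∀ i : Fin n, (B.filter (fun a => s i < a)).card + (i : ℕ) + 1 ≤ n := by
  constructor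
  · rintro ⟨hp, hc, hb⟩
    exact ⟨hp, hc, fun i => (orderIso_le_iff B hc i (s i)).1 (hb i)⟩
  · rintro ⟨hp, hc, hb⟩
    exact ⟨hp, hc, fun i => (orderIso_le_iff B hc i (s i)).2 (hb i)⟩

/-- A set of positive numbers is contained in a shifted basis iff the counting
condition holds. -/
lemma subset_basis_iff_count (n : ℕ) (hn : 0 < n) (s : Fin n → ℕ) (hs : StrictMono s)
    (hpos : ∀ i, 0 < s i) (A : Finset ℕ) (hA : ∀ a ∈ A, 0 < a) :
    (∃ B : Finset ℕ, IsShiftedBasis n s B ∧ A ⊆ B) ↔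
      (A.card ≤ n ∧ ∀ i : Fin n, (A.filter (fun a => s i < a)).card + (i : ℕ) + 1 ≤ n) := by
  classical
  constructor
  · rintro ⟨B, hB, hAB⟩
    rw [isShiftedBasis_iff_count] at hB
    obtain ⟨-, hBc, hBcount⟩ := hB
    refine ⟨hBc ▸ Finset.card_le_card hAB, fun i => ?_⟩
    have := Finset.card_le_card (Finset.filter_subset_filter (fun a => s i < a) hAB)
    have := hBcount i
    omega
  · rintro ⟨hk, hcount⟩
    set k := A.card with hkdef
    set F := (Finset.Icc 1 n) \ A with hF
    have hFcard : n - k ≤ F.card := by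
      have h1 : F.card + (Finset.Icc 1 n ∩ A).card = (Finset.Icc 1 n).card :=
        Finset.card_sdiff_add_card_inter (Finset.Icc 1 n) A
      have h2 : (Finset.Icc 1 n ∩ A).card ≤ k := by
        rw [hkdef]; exact Finset.card_le_card Finset.inter_subset_right
      have h3 : (Finset.Icc 1 n).card = n := by rw [Nat.card_Icc]; omega
      omega
    obtain ⟨C, hCF, hCcard, hdc⟩ := exists_downclosed F (n - k) hFcard
    have hdisj : Disjoint A C := by
      refine Finset.disjoint_left.2 fun x hxA hxC => ?_
      have := hCF hxC
      rw [hF, Finset.mem_sdiff] at this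
      exact this.2 hxA
    refine ⟨A ∪ C, ?_, Finset.subset_union_left⟩
    rw [isShiftedBasis_iff_count]
    refine ⟨?_, ?_, ?_⟩
    · intro a ha
      rcases Finset.mem_union.1 ha with h | h
      · exact hA a h
      · have := hCF h; rw [hF, Finset.mem_sdiff, Finset.mem_Icc] at this; omega
    · rw [Finset.card_union_of_disjoint hdisj, hCcard, ← hkdef]
      omega
    · intro i
      set e := (A.filter (fun a => s i < a)).card with he
      set p := (A.filter (fun a => ¬ s i < a)).card with hp
      have hep : e + p = k := by
        rw [he, hp, hkdef]; exact Finset.card_filter_add_card_filter_not _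
      have hsplit : ((A ∪ C).filter (fun a => s i < a)).card
          = e + (C.filter (fun a => s i < a)).card := by
        rw [Finset.filter_union]
        exact Finset.card_union_of_disjoint
          (Finset.disjoint_filter_filter hdisj)
      rw [hsplit]
      by_cases hc0 : (C.filter (fun a => s i < a)).card = 0
      · have := hcount i; omega
      · -- some c ∈ C with s i < c
        obtain ⟨c, hc⟩ := Finset.card_pos.1 (Nat.pos_of_ne_zero hc0)
        rw [Finset.mem_filter] at hc
        have hcn : c ≤ n := by
          have := hCF hc.1; rw [hF, Finset.mem_sdiff, Finset.mem_Icc] at this; omega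
        have hsin : s i < n := lt_of_lt_of_le hc.2 hcn
        -- F.filter (· ≤ s i) ⊆ C
        have hsub : F.filter (fun a => a ≤ s i) ⊆ C.filter (fun a => ¬ s i < a) := by
          intro f hf
          rw [Finset.mem_filter] at hf ⊢
          exact ⟨hdc c hc.1 f hf.1 (le_trans hf.2 (le_of_lt hc.2)), by omega⟩
        -- card computations
        have hFfil : F.filter (fun a => a ≤ s i) = Finset.Icc 1 (s i) \ A := by
          rw [hF]
          ext x
          simp only [Finset.mem_filter, Finset.mem_sdiff, Finset.mem_Icc]
          constructor
          · rintro ⟨⟨⟨hx1, hx2⟩, hx3⟩, hx4⟩; exact ⟨⟨hx1, hx4⟩, hx3⟩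
          · rintro ⟨⟨hx1, hx2⟩, hx3⟩; exact ⟨⟨⟨hx1, by omega⟩, hx3⟩, hx2⟩
        have hAfil : A.filter (fun a => ¬ s i < a) ⊆ Finset.Icc 1 (s i) := by
          intro x hx
          rw [Finset.mem_filter] at hx
          rw [Finset.mem_Icc]
          exact ⟨hA x hx.1, by omega⟩
        have hu : (F.filter (fun a => a ≤ s i)).card + p = s i := by
          rw [hFfil]
          have h1 : (Finset.Icc 1 (s i) \ A).card + (Finset.Icc 1 (s i) ∩ A).card
              = (Finset.Icc 1 (s i)).card :=
            Finset.card_sdiff_add_card_inter (Finset.Icc 1 (s i)) A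
          have h2 : Finset.Icc 1 (s i) ∩ A = A.filter (fun a => ¬ s i < a) := by
            ext x
            simp only [Finset.mem_inter, Finset.mem_Icc, Finset.mem_filter, not_lt]
            constructor
            · rintro ⟨⟨hx1, hx2⟩, hx3⟩; exact ⟨hx3, hx2⟩
            · rintro ⟨hx1, hx2⟩; exact ⟨⟨hA x hx1, hx2⟩, hx1⟩
          have h3 : (Finset.Icc 1 (s i)).card = s i := by rw [Nat.card_Icc]; omega
          rw [h2] at h1
          rw [hp]
          omega
        have hCsplit : (C.filter (fun a => s i < a)).card
            + (C.filter (fun a => ¬ s i < a)).card = n - k :=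
          hCcard ▸ Finset.card_filter_add_card_filter_not _
        have husub := Finset.card_le_card hsub
        have hsi := s_lb hs hpos i
        have := hcount i
        omega

/-- Every shifted matroid `SM(s_1, …, s_n)` is representable over `ℚ`: there is a
`ℚ`-vector space `V` and a family of `s_n` vectors in `V` (indexed by the ground set
`{1, …, s_n}`) such that a subset `A` of the ground set is independent in
`SM(s_1, …, s_n)` (i.e. contained in some basis) exactly when the corresponding
vectors are linearly independent. -/
theorem shifted_representable_rat (n : ℕ) (hn : 0 < n) (s : Fin n → ℕ)
    (hs : StrictMono s) (hpos : ∀ i, 0 < s i) :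
    ∃ (V : Type) (_ : AddCommGroup V) (_ : Module ℚ V) (v : ℕ → V),
      ∀ A : Finset ℕ, A ⊆ Finset.Icc 1 (s ⟨n - 1, by omega⟩) →
        ((∃ B : Finset ℕ, IsShiftedBasis n s B ∧ A ⊆ B) ↔
          LinearIndependent ℚ (fun x : A => v x.1)) := by
  classical
  set q : ℚ := (n : ℚ) + 1 with hqdef
  have hq0 : (0 : ℚ) < q := by positivity
  have hq1 : (1 : ℚ) < q := by
    rw [hqdef]
    have : (1 : ℚ) ≤ (n : ℚ) := by exact_mod_cast hn
    linarith
  set v : ℕ → (Fin n → ℚ) := fun j i => if j ≤ s i then q ^ (2 * j * (i : ℕ)) else 0 with hvdef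
  refine ⟨Fin n → ℚ, inferInstance, inferInstance, v, ?_⟩
  intro A hAsub
  have hApos : ∀ a ∈ A, 0 < a := fun a ha => (Finset.mem_Icc.1 (hAsub ha)).1
  rw [subset_basis_iff_count n hn s hs hpos A hApos]
  constructor
  · -- Good → LinearIndependent
    rintro ⟨hkn, hcount⟩
    set k := A.card with hkdef
    have hk : A.card = k := rfl
    set a : ℕ → ℕ := fun m => if h : m < k then (A.orderEmbOfFin hk ⟨m, h⟩ : ℕ) else 0 with hadef
    have ha_eq : ∀ (m : ℕ) (h : m < k), a m = A.orderEmbOfFin hk ⟨m, h⟩ := by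
      intro m h; rw [hadef]; simp [h]
    have ha_mono : ∀ x y : ℕ, x ≤ y → y < k → a x ≤ a y := by
      intro x y hxy hy
      rw [ha_eq x (by omega), ha_eq y hy]
      exact (A.orderEmbOfFin hk).monotone (by simpa [Fin.le_def] using hxy)
    have ha_strict : ∀ x y : ℕ, x < y → y < k → a x < a y := by
      intro x y hxy hy
      rw [ha_eq x (by omega), ha_eq y hy]
      exact (A.orderEmbOfFin hk).strictMono (by simpa [Fin.lt_def] using hxy)
    set r : Fin k → Fin n := fun l => ⟨n - k + l.1, by omega⟩ with hrdef
    have ha_s : ∀ l : Fin k, a l.1 ≤ s (r l) := by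
      intro l
      rw [ha_eq l.1 l.2]
      have h1 := hcount (r l)
      have h2 : ((r l : Fin n) : ℕ) = n - k + l.1 := rfl
      have h3 : (A.filter (fun x => s (r l) < x)).card + (l : ℕ) + 1 ≤ k := by
        have := l.2; omega
      have h4 := (orderIso_le_iff A hk l (s (r l))).2 h3
      rwa [Finset.coe_orderIsoOfFin_apply] at h4
    set f : ℕ → ℤ := fun l => ∑ j ∈ Finset.range l, (2 * (a j : ℤ) + 1) with hfdef
    set g : ℕ → ℤ := fun m => 2 * (a m : ℤ) * ((n - k + m : ℕ) : ℤ) - f m with hgdef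
    -- the key exponent inequality
    have key : ∀ l m : Fin k, l ≠ m →
        2 * (a m.1 : ℤ) * ((n - k + l.1 : ℕ) : ℤ) - f l.1 - g m.1 ≤ -1 := by
      intro l m hlm
      simp only [hgdef]
      have hcast : ∀ x : ℕ, x < k → ((n - k + x : ℕ) : ℤ) = (n : ℤ) - (k : ℤ) + (x : ℤ) := by
        intro x hx
        have : (n - k : ℕ) = n - k := rfl
        push_cast [Nat.cast_sub hkn]
        ring
      rw [hcast l.1 l.2, hcast m.1 m.2]
      have hfsum : ∀ x y : ℕ, x ≤ y → f y = f x + ∑ j ∈ Finset.Ico x y, (2 * (a j : ℤ) + 1) := by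
        intro x y hxy
        rw [hfdef]
        simp only [Finset.range_eq_Ico]
        rw [← Finset.sum_Ico_consecutive _ (Nat.zero_le x) hxy]
      rcases lt_or_gt_of_ne (fun h => hlm (Fin.ext h)) with hML | hML
      · -- l.1 < m.1
        have hsum := hfsum l.1 m.1 (le_of_lt hML)
        have hub : ∑ j ∈ Finset.Ico l.1 m.1, (2 * (a j : ℤ) + 1)
            ≤ (m.1 - l.1 : ℕ) • (2 * (a (m.1 - 1) : ℤ) + 1) := by
          have := Finset.sum_le_card_nsmul (Finset.Ico l.1 m.1)
            (fun j => 2 * (a j : ℤ) + 1) (2 * (a (m.1 - 1) : ℤ) + 1) ?_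
          · simpa [Nat.card_Ico] using this
          · intro j hj
            rw [Finset.mem_Ico] at hj
            have h7 : a j ≤ a (m.1 - 1) := ha_mono j (m.1 - 1) (by omega) (by have := m.2; omega)
            have h8 : (a j : ℤ) ≤ (a (m.1 - 1) : ℤ) := by exact_mod_cast h7
            show 2 * (a j : ℤ) + 1 ≤ 2 * (a (m.1 - 1) : ℤ) + 1
            linarith
        have hstep : a (m.1 - 1) < a m.1 := ha_strict (m.1 - 1) m.1 (by omega) m.2
        have hstep' : (a (m.1 - 1) : ℤ) + 1 ≤ (a m.1 : ℤ) := by exact_mod_cast hstep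
        have hcard : ((m.1 - l.1 : ℕ) : ℤ) = (m.1 : ℤ) - (l.1 : ℤ) := by
          push_cast [Nat.cast_sub (le_of_lt hML)]; ring
        rw [nsmul_eq_mul, hcard] at hub
        have h1 : (1 : ℤ) ≤ (m.1 : ℤ) - (l.1 : ℤ) := by omega
        nlinarith [hsum, hub, hstep', h1]
      · -- m.1 < l.1
        have hsum := hfsum m.1 l.1 (le_of_lt hML)
        have hlb : (l.1 - m.1 : ℕ) • (2 * (a m.1 : ℤ) + 1)
            ≤ ∑ j ∈ Finset.Ico m.1 l.1, (2 * (a j : ℤ) + 1) := by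
          have := Finset.card_nsmul_le_sum (Finset.Ico m.1 l.1)
            (fun j => 2 * (a j : ℤ) + 1) (2 * (a m.1 : ℤ) + 1) ?_
          · simpa [Nat.card_Ico] using this
          · intro j hj
            rw [Finset.mem_Ico] at hj
            have h7 : a m.1 ≤ a j := ha_mono m.1 j (by omega) (by have := l.2; omega)
            have h8 : (a m.1 : ℤ) ≤ (a j : ℤ) := by exact_mod_cast h7
            show 2 * (a m.1 : ℤ) + 1 ≤ 2 * (a j : ℤ) + 1
            linarith
        have hcard : ((l.1 - m.1 : ℕ) : ℤ) = (l.1 : ℤ) - (m.1 : ℤ) := by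
          push_cast [Nat.cast_sub (le_of_lt hML)]; ring
        rw [nsmul_eq_mul, hcard] at hlb
        have h1 : (1 : ℤ) ≤ (l.1 : ℤ) - (m.1 : ℤ) := by omega
        nlinarith [hsum, hlb, h1]
    -- the matrices
    set D : Matrix (Fin k) (Fin k) ℚ := fun l m => v (a m.1) (r l) with hDdef
    set df : Fin k → ℚ := fun l => q ^ (-(f l.1)) with hdfdef
    set dg : Fin k → ℚ := fun m => q ^ (-(g m.1)) with hdgdef
    set E : Matrix (Fin k) (Fin k) ℚ :=
      Matrix.diagonal df * D * Matrix.diagonal dg with hEdef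
    have hqne : q ≠ 0 := ne_of_gt hq0
    have hEentry : ∀ l m, E l m = df l * v (a m.1) (r l) * dg m := by
      intro l m
      rw [hEdef]
      rw [Matrix.mul_diagonal, Matrix.diagonal_mul]
    have hvnat : ∀ (m l : Fin k), a m.1 ≤ s (r l) →
        v (a m.1) (r l) = q ^ ((2 * (a m.1 : ℤ) * ((n - k + l.1 : ℕ) : ℤ))) := by
      intro m l h
      simp only [hvdef]
      rw [if_pos h, ← zpow_natCast]
      congr 1
    have hEdiag : ∀ l, E l l = 1 := by
      intro l
      rw [hEentry, hvnat l l (ha_s l)]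
      simp only [hdfdef, hdgdef]
      rw [← zpow_add₀ hqne, ← zpow_add₀ hqne]
      have hz : -f l.1 + 2 * (a l.1 : ℤ) * ((n - k + l.1 : ℕ) : ℤ) + -g l.1 = 0 := by
        simp only [hgdef]; ring
      rw [hz, zpow_zero]
    have hEoff : ∀ l m, l ≠ m → |E l m| ≤ q⁻¹ := by
      intro l m hlm
      rw [hEentry]
      by_cases hle : a m.1 ≤ s (r l)
      · rw [hvnat m l hle, hdfdef, hdgdef]
        rw [show q ^ (-f l.1) * q ^ (2 * (a m.1 : ℤ) * ((n - k + l.1 : ℕ) : ℤ)) * q ^ (-g m.1)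
            = q ^ (2 * (a m.1 : ℤ) * ((n - k + l.1 : ℕ) : ℤ) - f l.1 - g m.1) by
          rw [← zpow_add₀ hqne, ← zpow_add₀ hqne]; congr 1; ring]
        have hexp := key l m hlm
        have h2 : q ^ (2 * (a m.1 : ℤ) * ((n - k + l.1 : ℕ) : ℤ) - f l.1 - g m.1)
            ≤ q ^ (-1 : ℤ) := zpow_le_zpow_right₀ (le_of_lt hq1) hexp
        have h3 : (0:ℚ) < q ^ (2 * (a m.1 : ℤ) * ((n - k + l.1 : ℕ) : ℤ) - f l.1 - g m.1) :=
          zpow_pos hq0 _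
        rw [abs_of_pos h3]
        rwa [zpow_neg, zpow_one] at h2
      · rw [hvdef]
        simp only [if_neg hle]
        rw [mul_zero, zero_mul, abs_zero]
        positivity
    have hdetE : E.det ≠ 0 := by
      apply det_ne_zero_of_sum_row_lt_diag
      intro l
      have hnorm : ∀ x : ℚ, ‖x‖ = |(x : ℝ)| := by
        intro x; rw [← Rat.norm_cast_real, Real.norm_eq_abs]
      have hbound : ∀ m ∈ Finset.univ.erase l, ‖E l m‖ ≤ ((q⁻¹ : ℚ) : ℝ) := by
        intro m hm
        rw [Finset.mem_erase] at hm
        have := hEoff l m (Ne.symm hm.1)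
        rw [hnorm]
        calc |((E l m : ℚ) : ℝ)| = ((|E l m| : ℚ) : ℝ) := by push_cast; rfl
          _ ≤ _ := by exact_mod_cast this
      have hsum : ∑ m ∈ Finset.univ.erase l, ‖E l m‖
          ≤ (Finset.univ.erase l).card • ((q⁻¹ : ℚ) : ℝ) :=
        Finset.sum_le_card_nsmul _ _ _ hbound
      have hcard : (Finset.univ.erase l).card = k - 1 := by
        rw [Finset.card_erase_of_mem (Finset.mem_univ l), Finset.card_univ, Fintype.card_fin]
      have hq1R : (1 : ℝ) < (q : ℝ) := by exact_mod_cast hq1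
      have hfin : ((k - 1 : ℕ) : ℝ) * ((q⁻¹ : ℚ) : ℝ) < 1 := by
        push_cast
        rw [mul_inv_lt_iff₀ (by linarith), one_mul]
        have h5 : ((k - 1 : ℕ) : ℝ) < (q : ℝ) := by
          have hk1 : (k - 1 : ℕ) < n + 1 := by omega
          have h6 : ((k - 1 : ℕ) : ℝ) < ((n + 1 : ℕ) : ℝ) := by exact_mod_cast hk1
          rw [hqdef]; push_cast at h6 ⊢; linarith
        linarith
      rw [hEdiag l, norm_one]
      calc ∑ m ∈ Finset.univ.erase l, ‖E l m‖
          ≤ (Finset.univ.erase l).card • ((q⁻¹ : ℚ) : ℝ) := hsum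
        _ = ((k - 1 : ℕ) : ℝ) * ((q⁻¹ : ℚ) : ℝ) := by rw [hcard, nsmul_eq_mul]
        _ < 1 := hfin
    have hdetD : D.det ≠ 0 := by
      intro h
      apply hdetE
      rw [hEdef, Matrix.det_mul, Matrix.det_mul, h]
      ring
    have hDunit : IsUnit D := (Matrix.isUnit_iff_isUnit_det D).2 (isUnit_iff_ne_zero.2 hdetD)
    have hcols : LinearIndependent ℚ (fun m => D.transpose m) :=
      Matrix.linearIndependent_cols_iff_isUnit.2 hDunit
    set π : (Fin n → ℚ) →ₗ[ℚ] (Fin k → ℚ) := LinearMap.funLeft ℚ ℚ r with hπdef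
    have hfact : (fun m => D.transpose m) = π ∘ (fun m : Fin k => v (a m.1)) := by
      funext m
      funext l
      rfl
    rw [hfact] at hcols
    have hw : LinearIndependent ℚ (fun m : Fin k => v (a m.1)) :=
      LinearIndependent.of_comp π hcols
    have he : (fun x : A => v x.1) ∘ (A.orderIsoOfFin hk).toEquiv = fun m : Fin k => v (a m.1) := by
      funext m
      exact congrArg v (ha_eq m.1 m.2).symm
    exact (linearIndependent_equiv' (A.orderIsoOfFin hk).toEquiv he).mp hw
  · -- LinearIndependent → Good
    intro hli
    constructor
    · have h1 := hli.fintype_card_le_finrank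
      rwa [Module.finrank_fin_fun, Fintype.card_coe] at h1
    · intro i
      by_contra hbad
      push_neg at hbad
      set S := A.filter (fun x => s i < x) with hSdef
      have hφinj : Function.Injective (fun x : S => (⟨x.1, Finset.filter_subset _ _ x.2⟩ : A)) := by
        intro x y hxy
        exact Subtype.ext (by simpa using congrArg Subtype.val hxy)
      have hli2 : LinearIndependent ℚ (fun x : S => v x.1) :=
        hli.comp (fun x : S => (⟨x.1, Finset.filter_subset _ _ x.2⟩ : A)) hφinj
      set ι : ({j : Fin n // i < j} → ℚ) →ₗ[ℚ] (Fin n → ℚ) :=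
        { toFun := fun w j => if h : i < j then w ⟨j, h⟩ else 0
          map_add' := by
            intro w1 w2; funext j; by_cases h : i < j <;> simp [h]
          map_smul' := by
            intro c w; funext j; by_cases h : i < j <;> simp [h] } with hιdef
      have hfactor : (fun x : S => v x.1) = ι ∘ (fun x : S => fun j : {j : Fin n // i < j} => v x.1 j.1) := by
        funext x
        funext j
        simp only [Function.comp_apply, hιdef, LinearMap.coe_mk, AddHom.coe_mk]
        by_cases h : i < j
        · rw [dif_pos h]
        · rw [dif_neg h]
          have hji : j ≤ i := not_lt.1 h
          have hsji : s j ≤ s i := hs.monotone hji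
          have hxgt : s i < (x : ℕ) := (Finset.mem_filter.1 x.2).2
          have hnot : ¬ ((x : ℕ) ≤ s j) := by omega
          show (if (x : ℕ) ≤ s j then q ^ (2 * (x : ℕ) * (j : ℕ)) else 0) = 0
          rw [if_neg hnot]
      rw [hfactor] at hli2
      have hli3 := LinearIndependent.of_comp ι hli2
      have hcard := hli3.fintype_card_le_finrank
      rw [Module.finrank_pi] at hcard
      have hcS : Fintype.card S = S.card := Fintype.card_coe S
      have hcT : Fintype.card {j : Fin n // i < j} = (Finset.univ.filter (fun j : Fin n => i < j)).card :=
        Fintype.card_subtype _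
      have hcT2 : (Finset.univ.filter (fun j : Fin n => i < j)).card = n - 1 - i.1 := by
        have heq : Finset.univ.filter (fun j : Fin n => i < j) = Finset.Ioi i := by
          ext j; simp [Finset.mem_Ioi]
        rw [heq, Fin.card_Ioi]
      rw [hcS, hcT, hcT2] at hcard
      have := i.2
      omega
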